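/- For every PNF formula φ and every x ∈ Σ, the linear-factor-based partial derivative coincides with the direct partial derivative: {Γ | ⟨μ, Γ⟩ ∈ LF(φ) and x ⊨ μ} = ∂(φ, x). -/

import Mathlib

open scoped Classical

/-- LTL formulae in positive normal form. -/
inductive LTL (AP : Type) : Type
  | pos  : AP → LTL AP                      -- atomic proposition p
  | nneg : AP → LTL AP                      -- negated atomic proposition ¬p
  | tt   : LTL AP
  | ff   : LTL AP
  | conj : LTL AP → LTL AP → LTL AP
  | disj : LTL AP → LTL AP → LTL AP
  | next : LTL AP → LTL AP
  | untl : LTL AP → LTL AP → LTL AP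
  | rels : LTL AP → LTL AP → LTL AP
  deriving DecidableEq

/-- Literals over AP. -/
inductive Lit (AP : Type) : Type
  | pos : AP → Lit AP
  | neg : AP → Lit AP
  deriving DecidableEq

namespace Lit

variable {AP : Type} {S : Type}

/-- Negation of a literal. -/
def negate : Lit AP → Lit AP
  | pos p => neg p
  | neg p => pos p

/-- The LTL formula corresponding to a literal. -/
def toLTL : Lit AP → LTL AP
  | pos p => LTL.pos p
  | neg p => LTL.nneg p

/-- A literal holds at a symbol `x` relative to the interpretation `I`. -/
def Holds (I : S → Set AP) (x : S) : Lit AP → Prop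
  | pos p => p ∈ I x
  | neg p => p ∉ I x

end Lit

/-- A monomial: `none` represents ff, and `some s` a finite set of literals. -/
abbrev Mono (AP : Type) : Type := Option (Finset (Lit AP))

namespace LTL

variable {AP : Type} {S : Type}

/-- Suffix of an infinite word: `suffix σ n = σ[n..]`. -/
def suffix (σ : ℕ → S) (n : ℕ) : ℕ → S := fun i => σ (n + i)

/-- Satisfaction `σ ⊨ φ` of an LTL formula on an infinite word. -/
def Sat (I : S → Set AP) : LTL AP → (ℕ → S) → Prop
  | pos p, σ => p ∈ I (σ 0)
  | nneg p, σ => p ∉ I (σ 0)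
  | tt, _ => True
  | ff, _ => False
  | conj φ ψ, σ => Sat I φ σ ∧ Sat I ψ σ
  | disj φ ψ, σ => Sat I φ σ ∨ Sat I ψ σ
  | next φ, σ => Sat I φ (suffix σ 1)
  | untl φ ψ, σ => ∃ n, (∀ j < n, Sat I φ (suffix σ j)) ∧ Sat I ψ (suffix σ n)
  | rels φ ψ, σ => ∀ n, Sat I ψ (suffix σ n) ∨ ∃ j < n, Sat I φ (suffix σ j)

/-- A monomial is valid if it contains no complementary pair of literals. -/
def MonoValid : Mono AP → Prop
  | none => True
  | some s => ∀ ℓ ∈ s, ℓ.negate ∉ s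

/-- Smart conjunction `μ ⩀ ν` of monomials. -/
noncomputable def scm [DecidableEq AP] : Mono AP → Mono AP → Mono AP
  | some μ, some ν =>
      if ∃ ℓ ∈ μ ∪ ν, Lit.negate ℓ ∈ μ ∪ ν then none else some (μ ∪ ν)
  | _, _ => none

/-- The formula `Θ(μ)` associated with a monomial. -/
noncomputable def Theta : Mono AP → LTL AP
  | none => LTL.ff
  | some s => (s.toList.map Lit.toLTL).foldr LTL.conj LTL.tt

/-- A temporal formula: the outermost connective is neither ∧ nor ∨. -/
def Temporal : LTL AP → Prop
  | conj _ _ => False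
  | disj _ _ => False
  | _ => True

/-- Satisfaction of a formal conjunction `⋀Γ` (a finite set of formulae). -/
def SatConj (I : S → Set AP) (Γ : Finset (LTL AP)) (σ : ℕ → S) : Prop :=
  ∀ χ ∈ Γ, Sat I χ σ

/-- Set-based conjunctive normal form `SIMP`. -/
def SIMP [DecidableEq AP] : LTL AP → Finset (Finset (LTL AP))
  | conj φ ψ => (SIMP φ).biUnion fun Γ => (SIMP ψ).image fun Δ => Γ ∪ Δ
  | disj φ ψ => SIMP φ ∪ SIMP ψ
  | φ => {{φ}}

/-- Linear factors `LF(φ)`: pairs of a monomial (≠ ff) and a formal conjunction. -/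
noncomputable def LF [DecidableEq AP] : LTL AP → Finset (Mono AP × Finset (LTL AP))
  | pos p => {(some {Lit.pos p}, ∅)}
  | nneg p => {(some {Lit.neg p}, ∅)}
  | tt => {(some ∅, ∅)}
  | ff => ∅
  | disj φ ψ => LF φ ∪ LF ψ
  | conj φ ψ =>
      ((LF φ ×ˢ LF ψ).image fun pq => (scm pq.1.1 pq.2.1, pq.1.2 ∪ pq.2.2)).filter
        fun mg => mg.1 ≠ none
  | next φ => (SIMP φ).image fun Γ => ((some ∅ : Mono AP), Γ)
  | untl φ ψ => LF ψ ∪ (LF φ).image fun mg => (mg.1, insert (untl φ ψ) mg.2)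
  | rels φ ψ =>
      (((LF φ ×ˢ LF ψ).image fun pq => (scm pq.1.1 pq.2.1, pq.1.2 ∪ pq.2.2)).filter
        fun mg => mg.1 ≠ none)
      ∪ (LF ψ).image fun mg => (mg.1, insert (rels φ ψ) mg.2)

/-- A symbol satisfies a monomial: `x ⊨ μ`. -/
def MonoHolds (I : S → Set AP) (x : S) : Mono AP → Prop
  | none => False
  | some s => ∀ ℓ ∈ s, Lit.Holds I x ℓ

/-- Direct partial derivatives `∂(φ, x)`. -/
noncomputable def pd [DecidableEq AP] (I : S → Set AP) : LTL AP → S → Finset (Finset (LTL AP))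
  | tt, _ => {∅}
  | ff, _ => ∅
  | pos p, x => if p ∈ I x then {∅} else ∅
  | nneg p, x => if p ∉ I x then {∅} else ∅
  | disj φ ψ, x => pd I φ x ∪ pd I ψ x
  | conj φ ψ, x => ((pd I φ x) ×ˢ (pd I ψ x)).image fun gd => gd.1 ∪ gd.2
  | next φ, _ => SIMP φ
  | untl φ ψ, x => pd I ψ x ∪ (pd I φ x).image fun Γ => insert (untl φ ψ) Γ
  | rels φ ψ, x =>
      (((pd I φ x) ×ˢ (pd I ψ x)).image fun gd => gd.1 ∪ gd.2)
      ∪ (pd I ψ x).image fun Δ => insert (rels φ ψ) Δ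

/-- Iterated partial derivatives `∂⁺(φ)`. -/
def dplus [DecidableEq AP] : LTL AP → Finset (LTL AP)
  | pos p => {pos p}
  | nneg p => {nneg p}
  | tt => {tt}
  | ff => {ff}
  | disj φ ψ => dplus φ ∪ dplus ψ
  | conj φ ψ => dplus φ ∪ dplus ψ
  | next φ => insert (next φ) (dplus φ)
  | untl φ ψ => insert (untl φ ψ) (dplus φ ∪ dplus ψ)
  | rels φ ψ => insert (rels φ ψ) (dplus φ ∪ dplus ψ)

/-- Size of a formula: number of occurrences of literals, constants and operators. -/
def size : LTL AP → ℕ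
  | pos _ => 1
  | nneg _ => 1
  | tt => 1
  | ff => 1
  | conj φ ψ => size φ + size ψ + 1
  | disj φ ψ => size φ + size ψ + 1
  | next φ => size φ + 1
  | untl φ ψ => size φ + size ψ + 1
  | rels φ ψ => size φ + size ψ + 1

/-- Partial derivative of a formal conjunction: `∂(Γ, x)`. -/
def pdC [DecidableEq AP] (I : S → Set AP) (Γ : Finset (LTL AP)) (x : S) :
    Set (Finset (LTL AP)) :=
  { Δ | ∃ f : LTL AP → Finset (LTL AP), (∀ χ ∈ Γ, f χ ∈ pd I χ x) ∧ Δ = Γ.biUnion f }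

/-- The set `D(φ)` of partial derivative descendants of `φ` (smallest set closed
under the two rules). -/
inductive Desc [DecidableEq AP] (I : S → Set AP) (φ : LTL AP) : Finset (LTL AP) → Prop
  | base (x : S) (Γ : Finset (LTL AP)) : Γ ∈ pd I φ x → Desc I φ Γ
  | step (x : S) (Γ Δ : Finset (LTL AP)) : Desc I φ Γ → Δ ∈ pdC I Γ x → Desc I φ Δ

end LTL

@[simp] lemma monoHolds_none {AP S : Type} (I : S → Set AP) (x : S) :
    LTL.MonoHolds I x (none : Mono AP) ↔ False := Iff.rfl

@[simp] lemma monoHolds_some {AP S : Type} (I : S → Set AP) (x : S) (s : Finset (Lit AP)) :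
    LTL.MonoHolds I x (some s) ↔ ∀ ℓ ∈ s, Lit.Holds I x ℓ := Iff.rfl

@[simp] lemma lit_holds_pos {AP S : Type} (I : S → Set AP) (x : S) (p : AP) :
    Lit.Holds I x (Lit.pos p) ↔ p ∈ I x := Iff.rfl

@[simp] lemma lit_holds_neg {AP S : Type} (I : S → Set AP) (x : S) (p : AP) :
    Lit.Holds I x (Lit.neg p) ↔ p ∉ I x := Iff.rfl

lemma lit_holds_negate {AP S : Type} (I : S → Set AP) (x : S) (ℓ : Lit AP) :
    ¬ (Lit.Holds I x ℓ ∧ Lit.Holds I x ℓ.negate) := by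
  cases ℓ <;> simp [Lit.Holds, Lit.negate]

@[simp] lemma monoHolds_scm {AP S : Type} [DecidableEq AP] (I : S → Set AP) (x : S)
    (μ ν : Mono AP) :
    LTL.MonoHolds I x (LTL.scm μ ν) ↔ LTL.MonoHolds I x μ ∧ LTL.MonoHolds I x ν := by
  cases μ with
  | none => simp [LTL.scm, LTL.MonoHolds]
  | some s =>
    cases ν with
    | none => simp [LTL.scm, LTL.MonoHolds]
    | some t =>
      simp only [LTL.scm]
      split_ifs with h
      · simp only [LTL.MonoHolds, false_iff]
        rintro ⟨h1, h2⟩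
        obtain ⟨ℓ, hℓ, hneg⟩ := h
        have hall : ∀ m ∈ s ∪ t, Lit.Holds I x m := by
          intro m hm
          rcases Finset.mem_union.1 hm with hm | hm
          · exact h1 m hm
          · exact h2 m hm
        exact lit_holds_negate I x ℓ ⟨hall ℓ hℓ, hall ℓ.negate hneg⟩
      · simp only [LTL.MonoHolds, Finset.mem_union, or_imp, forall_and]

lemma scm_ne_none_of_holds {AP S : Type} [DecidableEq AP] {I : S → Set AP} {x : S}
    {μ : Mono AP} (h : LTL.MonoHolds I x μ) : μ ≠ none := by
  rintro rfl; exact h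

lemma scm_ne {AP S : Type} [DecidableEq AP] {I : S → Set AP} {x : S}
    {μ ν : Mono AP} (h1 : LTL.MonoHolds I x μ) (h2 : LTL.MonoHolds I x ν) :
    ¬ LTL.scm μ ν = none :=
  scm_ne_none_of_holds ((monoHolds_scm I x μ ν).2 ⟨h1, h2⟩)

/-- Theorem: the linear-factor-based partial derivative coincides with the
direct partial derivative: `{Γ | ⟨μ, Γ⟩ ∈ LF(φ), x ⊨ μ} = ∂(φ, x)`. -/
theorem lf_pd_coincide {AP S : Type} [Fintype AP] [Fintype S] [DecidableEq AP]
    (I : S → Set AP) (φ : LTL AP) (x : S) :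
    ((LTL.LF φ).filter fun mg => LTL.MonoHolds I x mg.1).image Prod.snd =
      LTL.pd I φ x := by
  induction φ with
  | pos p =>
    ext Γ
    by_cases hp : p ∈ I x <;> simp [LTL.LF, LTL.pd, hp] <;> aesop
  | nneg p =>
    ext Γ
    by_cases hp : p ∈ I x <;> simp [LTL.LF, LTL.pd, hp] <;> aesop
  | tt =>
    ext Γ
    simp [LTL.LF, LTL.pd]
  | ff =>
    simp [LTL.LF, LTL.pd]
  | conj φ ψ ihφ ihψ =>
    ext Γ
    simp only [LTL.LF, LTL.pd, ← ihφ, ← ihψ, Finset.mem_image, Finset.mem_filter,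
      Finset.mem_product, Prod.exists, Prod.mk.injEq, ne_eq]
    constructor
    · rintro ⟨a, b, ⟨⟨⟨m1, G1, m2, G2, ⟨h1, h2⟩, rfl, rfl⟩, -⟩, hm⟩, rfl⟩
      rw [monoHolds_scm] at hm
      exact ⟨G1, G2, ⟨⟨m1, G1, ⟨h1, hm.1⟩, rfl⟩, ⟨m2, G2, ⟨h2, hm.2⟩, rfl⟩⟩, rfl⟩
    · rintro ⟨a, b, ⟨⟨m1, G1, ⟨h1, hm1⟩, rfl⟩, ⟨m2, G2, ⟨h2, hm2⟩, rfl⟩⟩, rfl⟩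
      exact ⟨LTL.scm m1 m2, G1 ∪ G2,
        ⟨⟨⟨m1, G1, m2, G2, ⟨h1, h2⟩, rfl, rfl⟩, scm_ne hm1 hm2⟩,
          (monoHolds_scm I x m1 m2).2 ⟨hm1, hm2⟩⟩, rfl⟩
  | disj φ ψ ihφ ihψ =>
    rw [LTL.LF, LTL.pd, ← ihφ, ← ihψ, Finset.filter_union, Finset.image_union]
  | next φ =>
    ext Γ
    simp [LTL.LF, LTL.pd]
  | untl φ ψ ihφ ihψ =>
    ext Γ
    simp only [LTL.LF, LTL.pd, ← ihφ, ← ihψ, Finset.mem_union, Finset.mem_image,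
      Finset.mem_filter, Prod.exists, Prod.mk.injEq]
    constructor
    · rintro ⟨a, b, ⟨h | ⟨m, G, hmem, rfl, rfl⟩, hm⟩, rfl⟩
      · exact Or.inl ⟨a, b, ⟨h, hm⟩, rfl⟩
      · exact Or.inr ⟨G, ⟨m, G, ⟨hmem, hm⟩, rfl⟩, rfl⟩
    · rintro (⟨a, b, ⟨h, hm⟩, rfl⟩ | ⟨G, ⟨m, G', ⟨hmem, hm⟩, rfl⟩, rfl⟩)
      · exact ⟨a, b, ⟨Or.inl h, hm⟩, rfl⟩
      · exact ⟨m, insert (φ.untl ψ) G', ⟨Or.inr ⟨m, G', hmem, rfl, rfl⟩, hm⟩, rfl⟩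
  | rels φ ψ ihφ ihψ =>
    ext Γ
    simp only [LTL.LF, LTL.pd, ← ihφ, ← ihψ, Finset.mem_union, Finset.mem_image,
      Finset.mem_filter, Finset.mem_product, Prod.exists, Prod.mk.injEq, ne_eq]
    constructor
    · rintro ⟨a, b, ⟨⟨⟨m1, G1, m2, G2, ⟨h1, h2⟩, rfl, rfl⟩, -⟩ | ⟨m, G, hmem, rfl, rfl⟩, hm⟩, rfl⟩
      · rw [monoHolds_scm] at hm
        exact Or.inl ⟨G1, G2, ⟨⟨m1, G1, ⟨h1, hm.1⟩, rfl⟩, ⟨m2, G2, ⟨h2, hm.2⟩, rfl⟩⟩, rfl⟩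
      · exact Or.inr ⟨G, ⟨m, G, ⟨hmem, hm⟩, rfl⟩, rfl⟩
    · rintro (⟨a, b, ⟨⟨m1, G1, ⟨h1, hm1⟩, rfl⟩, ⟨m2, G2, ⟨h2, hm2⟩, rfl⟩⟩, rfl⟩ |
        ⟨G, ⟨m, G', ⟨hmem, hm⟩, rfl⟩, rfl⟩)
      · exact ⟨LTL.scm m1 m2, G1 ∪ G2,
          ⟨Or.inl ⟨⟨m1, G1, m2, G2, ⟨h1, h2⟩, rfl, rfl⟩, scm_ne hm1 hm2⟩,
            (monoHolds_scm I x m1 m2).2 ⟨hm1, hm2⟩⟩, rfl⟩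
      · exact ⟨m, insert (φ.rels ψ) G', ⟨Or.inr ⟨m, G', hmem, rfl, rfl⟩, hm⟩, rfl⟩
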